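/- arXiv:1605.03344 — 2 statements merged into one kernel-verified Lean document; each statement's English description precedes it below -/
import Mathlib

section
/- (Bounds of the L₂ registration error) Let Y be a nonempty finite set of points in ℝ³, let x₁, …, x_N ∈ ℝ³ be data points, let r₀, t₀ ∈ ℝ³, and let σ_r, σ_t ≥ 0. For r, t ∈ ℝ³ define the per-point residual e_i(r, t) = min_{y ∈ Y} ‖exp([r]ₓ) x_i + t − y‖ and the registration error E(r, t) = Σ_{i=1}^{N} e_i(r, t)². Define γ_{r,i} = 2 sin(min(√3 σ_r / 2, π/2)) ‖x_i‖ and γ_t = √3 σ_t. Then for every r in the cube of half side-length σ_r centered at r₀ and every t in the cube of half side-length σ_t centered at t₀: Σ_{i=1}^{N} max(e_i(r₀, t₀) − (γ_{r,i} + γ_t), 0)² ≤ E(r, t). In particular this sum is a lower bound, and E(r₀, t₀) an upper bound, of the infimum of E over the domain. -/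
open Matrix Real

/-- The skew-symmetric cross-product matrix of a vector `r ∈ ℝ³`. -/
noncomputable def crossMat (r : EuclideanSpace ℝ (Fin 3)) : Matrix (Fin 3) (Fin 3) ℝ :=
  !![0, -r 2, r 1; r 2, 0, -r 0; -r 1, r 0, 0]

/-- The rotation matrix `R_r = exp([r]ₓ)` of an angle-axis vector `r ∈ ℝ³`. -/
noncomputable def rotOf (r : EuclideanSpace ℝ (Fin 3)) : Matrix (Fin 3) (Fin 3) ℝ :=
  NormedSpace.exp (crossMat r)

/-- Application of a `3 × 3` matrix to a vector of `ℝ³` (with the Euclidean norm). -/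
noncomputable def mApp (A : Matrix (Fin 3) (Fin 3) ℝ) (x : EuclideanSpace ℝ (Fin 3)) :
    EuclideanSpace ℝ (Fin 3) :=
  Matrix.toEuclideanLin A x

/- ------------------------------------------------------------------ -/
/- Auxiliary material                                                  -/
/- ------------------------------------------------------------------ -/

theorem crossMat_transpose (r : EuclideanSpace ℝ (Fin 3)) : (crossMat r)ᵀ = -(crossMat r) := by
  ext i j
  rw [Matrix.transpose_apply]
  fin_cases i <;> fin_cases j <;> simp [crossMat]

theorem crossMat_sub (a b : EuclideanSpace ℝ (Fin 3)) :
    crossMat a - crossMat b = crossMat (a - b) := by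
  ext i j
  fin_cases i <;> fin_cases j <;> simp [crossMat] <;> ring

theorem crossMat_smul (s : ℝ) (a : EuclideanSpace ℝ (Fin 3)) :
    s • crossMat a = crossMat (s • a) := by
  ext i j
  fin_cases i <;> fin_cases j <;> simp [crossMat]

theorem mApp_mul (A B : Matrix (Fin 3) (Fin 3) ℝ) (x : EuclideanSpace ℝ (Fin 3)) :
    mApp (A * B) x = mApp A (mApp B x) := by
  simp [mApp, Matrix.toEuclideanLin_apply, Matrix.mulVec_mulVec]

theorem mApp_zero (A : Matrix (Fin 3) (Fin 3) ℝ) : mApp A 0 = 0 := by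
  simp [mApp]

theorem norm_mApp_crossMat_le (v w : EuclideanSpace ℝ (Fin 3)) :
    ‖mApp (crossMat v) w‖ ≤ ‖v‖ * ‖w‖ := by
  have h1 : ‖mApp (crossMat v) w‖ ^ 2 ≤ (‖v‖ * ‖w‖) ^ 2 := by
    have e1 : ∀ u : EuclideanSpace ℝ (Fin 3), ‖u‖ ^ 2 = u 0 ^ 2 + u 1 ^ 2 + u 2 ^ 2 := by
      intro u
      rw [EuclideanSpace.norm_eq, Real.sq_sqrt (by positivity)]
      simp [Fin.sum_univ_three, sq_abs]
    have happ : ∀ i, mApp (crossMat v) w i = (crossMat v).mulVec (fun j => w j) i := fun i => rfl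
    rw [mul_pow, e1, e1, e1, happ, happ, happ]
    simp [crossMat, Matrix.mulVec, dotProduct, Fin.sum_univ_three]
    nlinarith [sq_nonneg (v 0 * w 0 + v 1 * w 1 + v 2 * w 2), sq_nonneg (v 0), sq_nonneg (w 0)]
  have h2 : 0 ≤ ‖v‖ * ‖w‖ := by positivity
  nlinarith [norm_nonneg (mApp (crossMat v) w)]

section MatrixNormed

attribute [local instance] Matrix.linftyOpNormedAddCommGroup Matrix.linftyOpNormedRing
  Matrix.linftyOpNormedAlgebra

theorem norm_mApp_of_unitary {U : Matrix (Fin 3) (Fin 3) ℝ} (hU : Uᵀ * U = 1)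
    (w : EuclideanSpace ℝ (Fin 3)) : ‖mApp U w‖ = ‖w‖ := by
  have h2 : ∀ v : EuclideanSpace ℝ (Fin 3), ‖v‖ ^ 2 = inner ℝ v v := by
    intro v; rw [real_inner_self_eq_norm_sq]
  have key : inner ℝ (mApp U w) (mApp U w) = (inner ℝ w w : ℝ) := by
    simp only [mApp, Matrix.toEuclideanLin_apply, EuclideanSpace.inner_eq_star_dotProduct]
    simp only [star_trivial]
    simp only [Equiv.apply_symm_apply, ← Matrix.vecMul_transpose, ← dotProduct_mulVec,
      Matrix.mulVec_mulVec, hU, Matrix.one_mulVec]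
    rw [Matrix.vecMul_vecMul, Matrix.transpose_transpose, hU, Matrix.vecMul_one]
  have := h2 (mApp U w); rw [key, ← h2 w] at this
  have h3 : 0 ≤ ‖mApp U w‖ := norm_nonneg _
  nlinarith [norm_nonneg w]

theorem exp_skew_unitary {M : Matrix (Fin 3) (Fin 3) ℝ} (hM : Mᵀ = -M) :
    (NormedSpace.exp M)ᵀ * NormedSpace.exp M = 1 := by
  have hs : M ∈ skewAdjoint (Matrix (Fin 3) (Fin 3) ℝ) := by
    rw [skewAdjoint.mem_iff]; rw [Matrix.star_eq_conjTranspose]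
    rw [Matrix.conjTranspose_eq_transpose_of_trivial]; exact hM
  have := @NormedSpace.exp_mem_unitary_of_mem_skewAdjoint _ _ _ _ _
    ⟨by exact continuous_id.matrix_conjTranspose⟩ _ hs
  have h1 := (Unitary.mem_iff.mp this).1
  rw [Matrix.star_eq_conjTranspose] at h1
  rw [Matrix.conjTranspose_eq_transpose_of_trivial] at h1
  exact h1

theorem norm_mApp_exp_crossMat (v w : EuclideanSpace ℝ (Fin 3)) :
    ‖mApp (NormedSpace.exp (crossMat v)) w‖ = ‖w‖ :=
  norm_mApp_of_unitary (exp_skew_unitary (crossMat_transpose v)) w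

theorem norm_mApp_rotOf (v w : EuclideanSpace ℝ (Fin 3)) : ‖mApp (rotOf v) w‖ = ‖w‖ :=
  norm_mApp_exp_crossMat v w

theorem lip (a b x : EuclideanSpace ℝ (Fin 3)) :
    ‖mApp (rotOf a) x - mApp (rotOf b) x‖ ≤ ‖a - b‖ * ‖x‖ := by
  set X := crossMat a with hX
  set Y := crossMat b with hY
  let φ : Matrix (Fin 3) (Fin 3) ℝ →L[ℝ] EuclideanSpace ℝ (Fin 3) :=
    LinearMap.toContinuousLinearMap ((Matrix.toEuclideanLin.toLinearMap).flip x)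
  have hφ : ∀ A, φ A = mApp A x := fun A => rfl
  set G : ℝ → EuclideanSpace ℝ (Fin 3) :=
    fun s => φ (NormedSpace.exp (s • X) * NormedSpace.exp ((1 - s) • Y)) with hGdef
  set D : ℝ → EuclideanSpace ℝ (Fin 3) :=
    fun s => φ (NormedSpace.exp (s • X) * ((X - Y) * NormedSpace.exp ((1 - s) • Y)))
      with hDdef
  have hG : ∀ s, HasDerivAt G (D s) s := by
    intro s
    have h1 : HasDerivAt (fun u : ℝ => NormedSpace.exp (u • X))
        (NormedSpace.exp (s • X) * X) s := hasDerivAt_exp_smul_const X s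
    have h2' : HasDerivAt (fun u : ℝ => NormedSpace.exp (u • Y))
        (Y * NormedSpace.exp ((1 - s) • Y)) (1 - s) := hasDerivAt_exp_smul_const' Y (1 - s)
    have hu : HasDerivAt (fun u : ℝ => 1 - u) (-1) s := by
      simpa using (hasDerivAt_id s).const_sub 1
    have h2 : HasDerivAt (fun u : ℝ => NormedSpace.exp ((1 - u) • Y))
        ((-1 : ℝ) • (Y * NormedSpace.exp ((1 - s) • Y))) s := h2'.scomp s hu
    have h3 := h1.mul h2
    have heq : NormedSpace.exp (s • X) * X * NormedSpace.exp ((1 - s) • Y) +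
        NormedSpace.exp (s • X) * ((-1 : ℝ) • (Y * NormedSpace.exp ((1 - s) • Y))) =
        NormedSpace.exp (s • X) * ((X - Y) * NormedSpace.exp ((1 - s) • Y)) := by
      simp only [neg_smul, one_smul]
      noncomm_ring
    rw [heq] at h3
    exact (φ.hasFDerivAt.comp_hasDerivAt s h3 : _)
  have hbound : ∀ s ∈ Set.Ico (0:ℝ) 1, ‖D s‖ ≤ ‖a - b‖ * ‖x‖ := by
    intro s _
    have e1 : D s = mApp (NormedSpace.exp (crossMat (s • a)))
        (mApp (crossMat (a - b)) (mApp (NormedSpace.exp (crossMat ((1 - s) • b))) x)) := by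
      rw [hDdef]
      simp only [hφ, hX, hY, crossMat_smul, crossMat_sub, mApp_mul]
    rw [e1, norm_mApp_exp_crossMat]
    calc ‖mApp (crossMat (a - b)) (mApp (NormedSpace.exp (crossMat ((1 - s) • b))) x)‖
        ≤ ‖a - b‖ * ‖mApp (NormedSpace.exp (crossMat ((1 - s) • b))) x‖ :=
          norm_mApp_crossMat_le _ _
      _ = ‖a - b‖ * ‖x‖ := by rw [norm_mApp_exp_crossMat]
  have hmvt := norm_image_sub_le_of_norm_deriv_le_segment'
    (f := G) (f' := D) (C := ‖a - b‖ * ‖x‖) (a := (0:ℝ)) (b := 1)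
    (fun s hs => (hG s).hasDerivWithinAt) hbound 1 (by norm_num)
  have hG1 : G 1 = mApp (rotOf a) x := by
    rw [hGdef]
    simp only [one_smul, sub_self, zero_smul, NormedSpace.exp_zero, mul_one, hφ]
    rfl
  have hG0 : G 0 = mApp (rotOf b) x := by
    rw [hGdef]
    simp only [zero_smul, sub_zero, one_smul, NormedSpace.exp_zero, one_mul, hφ]
    rfl
  rw [hG1, hG0] at hmvt
  simpa using hmvt

end MatrixNormed

/- Spherical geometry -/

theorem my_arccos_le_arccos {x y : ℝ} (h : x ≤ y) : Real.arccos y ≤ Real.arccos x := by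
  simp only [Real.arccos]
  have := Real.monotone_arcsin h
  linarith

theorem abs_inner_le_one {u v : EuclideanSpace ℝ (Fin 3)} (hu : ‖u‖ = 1) (hv : ‖v‖ = 1) :
    |(inner ℝ u v : ℝ)| ≤ 1 := by
  have := abs_real_inner_le_norm u v
  rw [hu, hv] at this; simpa using this

theorem sph_tri {u v w : EuclideanSpace ℝ (Fin 3)} (hu : ‖u‖ = 1) (hv : ‖v‖ = 1) (hw : ‖w‖ = 1) :
    arccos (inner ℝ u w) ≤ arccos (inner ℝ u v) + arccos (inner ℝ v w) := by
  have e_vu : (inner ℝ v u : ℝ) = inner ℝ u v := real_inner_comm u v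
  have e_wv : (inner ℝ w v : ℝ) = inner ℝ v w := real_inner_comm v w
  set a : ℝ := (inner ℝ u v : ℝ) with ha
  set b : ℝ := (inner ℝ v w : ℝ) with hb
  set c : ℝ := (inner ℝ u w : ℝ) with hc
  rw [ha] at e_vu; rw [hb] at e_wv
  have ha1 : |a| ≤ 1 := abs_inner_le_one hu hv
  have hb1 : |b| ≤ 1 := abs_inner_le_one hv hw
  have hc1 : |c| ≤ 1 := abs_inner_le_one hu hw
  have hvv : (inner ℝ v v : ℝ) = 1 := by
    rw [real_inner_self_eq_norm_sq, hv]; norm_num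
  have huu : (inner ℝ u u : ℝ) = 1 := by
    rw [real_inner_self_eq_norm_sq, hu]; norm_num
  have hww : (inner ℝ w w : ℝ) = 1 := by
    rw [real_inner_self_eq_norm_sq, hw]; norm_num
  have h1 : (inner ℝ (u - a • v) (w - b • v) : ℝ) = c - a * b := by
    simp only [inner_sub_left, inner_sub_right, real_inner_smul_left, real_inner_smul_right,
      hvv, e_vu, e_wv, ← ha, ← hb, ← hc]
    ring
  have h2 : ‖u - a • v‖ = Real.sqrt (1 - a ^ 2) := by
    rw [show (1 : ℝ) - a ^ 2 = inner ℝ (u - a • v) (u - a • v) by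
      simp only [inner_sub_left, inner_sub_right, real_inner_smul_left, real_inner_smul_right,
        hvv, huu, e_vu, ← ha]; ring]
    rw [real_inner_self_eq_norm_sq]
    exact (Real.sqrt_sq (norm_nonneg _)).symm
  have h3 : ‖w - b • v‖ = Real.sqrt (1 - b ^ 2) := by
    rw [show (1 : ℝ) - b ^ 2 = inner ℝ (w - b • v) (w - b • v) by
      simp only [inner_sub_left, inner_sub_right, real_inner_smul_left, real_inner_smul_right,
        hvv, hww, e_wv, ← hb]; ring]
    rw [real_inner_self_eq_norm_sq]
    exact (Real.sqrt_sq (norm_nonneg _)).symm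
  have hcs := abs_real_inner_le_norm (u - a • v) (w - b • v)
  rw [h1, h2, h3] at hcs
  have key : a * b - Real.sqrt (1 - a ^ 2) * Real.sqrt (1 - b ^ 2) ≤ c := by
    have := neg_abs_le (c - a * b)
    linarith [this, hcs]
  rcases le_or_gt (arccos a + arccos b) π with hle | hgt
  · have hcos : Real.cos (arccos a + arccos b) ≤ c := by
      rw [Real.cos_add, Real.cos_arccos (by linarith [abs_le.mp ha1]) (by linarith [abs_le.mp ha1]),
        Real.cos_arccos (by linarith [abs_le.mp hb1]) (by linarith [abs_le.mp hb1]),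
        Real.sin_arccos, Real.sin_arccos]
      exact key
    have h5 := my_arccos_le_arccos hcos
    rwa [Real.arccos_cos (add_nonneg (Real.arccos_nonneg _) (Real.arccos_nonneg _)) hle] at h5
  · linarith [Real.arccos_le_pi c]

theorem chord_eq {u v : EuclideanSpace ℝ (Fin 3)} (hu : ‖u‖ = 1) (hv : ‖v‖ = 1) :
    ‖u - v‖ = 2 * Real.sin (arccos (inner ℝ u v) / 2) := by
  have hc1 := abs_inner_le_one hu hv
  have hsq : ‖u - v‖ ^ 2 = 2 - 2 * (inner ℝ u v : ℝ) := by
    rw [norm_sub_sq_real, hu, hv]; ring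
  have hcos : Real.cos (arccos (inner ℝ u v)) = inner ℝ u v :=
    Real.cos_arccos (by linarith [abs_le.mp hc1]) (by linarith [abs_le.mp hc1])
  have hhalf : Real.cos (arccos (inner ℝ u v)) =
      Real.cos (arccos (inner ℝ u v) / 2) ^ 2 - Real.sin (arccos (inner ℝ u v) / 2) ^ 2 := by
    rw [show arccos (inner ℝ u v) = 2 * (arccos (inner ℝ u v) / 2) by ring, Real.cos_two_mul']
    ring_nf
  have hpyth := Real.sin_sq_add_cos_sq (arccos (inner ℝ u v) / 2)
  have hanonneg : (0:ℝ) ≤ arccos (inner ℝ u v) := Real.arccos_nonneg _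
  have hs_nonneg : 0 ≤ Real.sin (arccos (inner ℝ u v) / 2) :=
    Real.sin_nonneg_of_nonneg_of_le_pi (by linarith)
      (by linarith [Real.arccos_le_pi (inner ℝ u v : ℝ), Real.pi_pos])
  have h4 : ‖u - v‖ ^ 2 = (2 * Real.sin (arccos (inner ℝ u v) / 2)) ^ 2 := by
    rw [hsq]; nlinarith [hcos, hhalf, hpyth]
  calc ‖u - v‖ = Real.sqrt (‖u - v‖ ^ 2) := (Real.sqrt_sq (norm_nonneg _)).symm
    _ = Real.sqrt ((2 * Real.sin (arccos (inner ℝ u v) / 2)) ^ 2) := by rw [h4]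
    _ = 2 * Real.sin (arccos (inner ℝ u v) / 2) := Real.sqrt_sq (by positivity)

theorem angle_eq_arcsin {u v : EuclideanSpace ℝ (Fin 3)} (hu : ‖u‖ = 1) (hv : ‖v‖ = 1) :
    arccos (inner ℝ u v) = 2 * Real.arcsin (‖u - v‖ / 2) := by
  have h1 := chord_eq hu hv
  have h2 : ‖u - v‖ / 2 = Real.sin (arccos (inner ℝ u v) / 2) := by linarith
  have hanonneg : (0:ℝ) ≤ arccos (inner ℝ u v) := Real.arccos_nonneg _
  rw [h2, Real.arcsin_sin (by linarith [Real.pi_pos])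
    (by linarith [Real.arccos_le_pi (inner ℝ u v : ℝ)])]
  ring

theorem chain_bound (p : ℕ → EuclideanSpace ℝ (Fin 3)) (hp : ∀ k, ‖p k‖ = 1) (δ' : ℝ)
    (n : ℕ) (hchord : ∀ k < n, ‖p (k + 1) - p k‖ ≤ δ') :
    arccos (inner ℝ (p 0) (p n)) ≤ n * (2 * Real.arcsin (δ' / 2)) := by
  induction n with
  | zero =>
    have : (inner ℝ (p 0) (p 0) : ℝ) = 1 := by
      rw [real_inner_self_eq_norm_sq, hp 0]; norm_num
    simp [this, hp 0]
  | succ n ih =>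
    have h1 : arccos (inner ℝ (p 0) (p (n + 1))) ≤
        arccos (inner ℝ (p 0) (p n)) + arccos (inner ℝ (p n) (p (n + 1))) :=
      sph_tri (hp 0) (hp n) (hp (n + 1))
    have h2 : arccos (inner ℝ (p n) (p (n + 1))) ≤ 2 * Real.arcsin (δ' / 2) := by
      rw [angle_eq_arcsin (hp n) (hp (n + 1))]
      have hle : ‖p n - p (n + 1)‖ ≤ δ' := by
        rw [norm_sub_rev]; exact hchord n (Nat.lt_succ_self n)
      have := Real.monotone_arcsin (by linarith : ‖p n - p (n + 1)‖ / 2 ≤ δ' / 2)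
      linarith
    have h3 := ih (fun k hk => hchord k (hk.trans (Nat.lt_succ_self n)))
    push_cast
    push_cast at h3
    linarith

theorem le_of_subdiv {θ δ : ℝ} (hδ : 0 < δ)
    (h : ∀ n : ℕ, 1 ≤ n → θ ≤ n * (2 * Real.arcsin (δ / (2 * n)))) : θ ≤ δ := by
  have hslope : Filter.Tendsto (fun x : ℝ => Real.arcsin x / x) (nhdsWithin 0 {0}ᶜ) (nhds 1) := by
    have hd : HasDerivAt Real.arcsin 1 0 := by
      have := Real.hasDerivAt_arcsin (by norm_num : (0:ℝ) ≠ -1) (by norm_num : (0:ℝ) ≠ 1)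
      simpa using this
    have := hasDerivAt_iff_tendsto_slope.mp hd
    refine this.congr' ?_
    filter_upwards [self_mem_nhdsWithin] with x hx
    simp [slope_def_field, Real.arcsin_zero]
  have hseq : Filter.Tendsto (fun n : ℕ => δ / (2 * n)) Filter.atTop (nhdsWithin 0 {0}ᶜ) := by
    rw [tendsto_nhdsWithin_iff]
    constructor
    · have h0 : Filter.Tendsto (fun n : ℕ => (1:ℝ) / n) Filter.atTop (nhds 0) :=
        tendsto_one_div_atTop_nhds_zero_nat
      have := h0.const_mul (δ / 2)
      simp only [mul_zero] at this
      refine this.congr fun n => ?_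
      field_simp
    · filter_upwards [Filter.eventually_ge_atTop 1] with n hn
      have hn' : (0:ℝ) < n := by exact_mod_cast hn
      simp only [Set.mem_compl_iff, Set.mem_singleton_iff]
      positivity
  have hcomp : Filter.Tendsto (fun n : ℕ => δ * (Real.arcsin (δ / (2 * n)) / (δ / (2 * n))))
      Filter.atTop (nhds δ) := by
    have := (hslope.comp hseq).const_mul δ
    simpa using this
  refine ge_of_tendsto hcomp ?_
  filter_upwards [Filter.eventually_ge_atTop 1] with n hn
  have hn' : (0:ℝ) < n := by exact_mod_cast hn
  have hne : δ / (2 * n) ≠ 0 := by positivity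
  have heq : δ * (Real.arcsin (δ / (2 * n)) / (δ / (2 * n))) =
      n * (2 * Real.arcsin (δ / (2 * n))) := by
    field_simp
  rw [heq]
  exact h n hn

theorem rot_bound (r₀ r x : EuclideanSpace ℝ (Fin 3)) {δ : ℝ} (hδ0 : 0 ≤ δ)
    (hδ : ‖r - r₀‖ ≤ δ) :
    ‖mApp (rotOf r₀) x - mApp (rotOf r) x‖ ≤ 2 * Real.sin (min (δ / 2) (π / 2)) * ‖x‖ := by
  have hmin0 : 0 ≤ min (δ / 2) (π / 2) := le_min (by linarith) (by positivity)
  have hminpi : min (δ / 2) (π / 2) ≤ π := (min_le_right _ _).trans (by linarith [Real.pi_pos])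
  have hsin0 : 0 ≤ Real.sin (min (δ / 2) (π / 2)) :=
    Real.sin_nonneg_of_nonneg_of_le_pi hmin0 hminpi
  by_cases hx : x = 0
  · simp [hx, mApp_zero]
  by_cases hr : r = r₀
  · rw [hr, sub_self, norm_zero]
    positivity
  have hρ : 0 < ‖x‖ := norm_pos_iff.mpr hx
  have hd0 : 0 < ‖r - r₀‖ := norm_pos_iff.mpr (sub_ne_zero.mpr hr)
  set d : EuclideanSpace ℝ (Fin 3) := r - r₀ with hd
  set c : ℝ → EuclideanSpace ℝ (Fin 3) := fun s => mApp (rotOf (r₀ + s • d)) x with hc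
  have hcnorm : ∀ s, ‖c s‖ = ‖x‖ := fun s => norm_mApp_rotOf _ x
  set u : ℝ → EuclideanSpace ℝ (Fin 3) := fun s => ‖x‖⁻¹ • c s with hu
  have hunorm : ∀ s, ‖u s‖ = 1 := by
    intro s
    rw [hu]
    simp only [norm_smul, norm_inv, norm_norm, hcnorm s]
    field_simp
  set θ : ℝ := Real.arccos (inner ℝ (u 0) (u 1)) with hθ
  have hstep : ∀ n : ℕ, 1 ≤ n → θ ≤ n * (2 * Real.arcsin (‖d‖ / (2 * n))) := by
    intro n hn
    have hn0 : (0:ℝ) < n := by exact_mod_cast hn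
    set p : ℕ → EuclideanSpace ℝ (Fin 3) := fun k => u ((k : ℝ) / n) with hpdef
    have hpnorm : ∀ k, ‖p k‖ = 1 := fun k => hunorm _
    have hchord : ∀ k < n, ‖p (k + 1) - p k‖ ≤ ‖d‖ / n := by
      intro k _
      have h1 : p (k + 1) - p k = ‖x‖⁻¹ • (c (((k:ℝ) + 1) / n) - c ((k:ℝ) / n)) := by
        rw [hpdef]
        push_cast
        rw [hu, smul_sub]
      have h2 : ‖c (((k:ℝ) + 1) / n) - c ((k:ℝ) / n)‖ ≤ (‖d‖ / n) * ‖x‖ := by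
        rw [hc]
        have h3 := lip (r₀ + (((k:ℝ) + 1) / n) • d) (r₀ + ((k:ℝ) / n) • d) x
        have h4 : r₀ + (((k:ℝ) + 1) / n) • d - (r₀ + ((k:ℝ) / n) • d) = ((1:ℝ) / n) • d := by
          rw [show ((1:ℝ)/n) = ((k:ℝ)+1)/n - (k:ℝ)/n by field_simp; ring, sub_smul]
          abel
        rw [h4] at h3
        have h5 : ‖((1:ℝ) / n) • d‖ = ‖d‖ / n := by
          rw [norm_smul, Real.norm_eq_abs, abs_of_pos (by positivity : (0:ℝ) < 1 / n)]
          ring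
        rw [h5] at h3
        exact h3
      rw [h1, norm_smul, norm_inv, norm_norm]
      calc ‖x‖⁻¹ * ‖c (((k:ℝ) + 1) / n) - c ((k:ℝ) / n)‖ ≤ ‖x‖⁻¹ * ((‖d‖ / n) * ‖x‖) := by
            apply mul_le_mul_of_nonneg_left h2 (by positivity)
        _ = ‖d‖ / n := by field_simp
    have hbound := chain_bound p hpnorm (‖d‖ / n) n hchord
    have hp0 : p 0 = u 0 := by rw [hpdef]; norm_num
    have hpn : p n = u 1 := by
      show u ((n : ℝ) / (n : ℝ)) = u 1
      rw [div_self (ne_of_gt hn0)]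
    rw [hp0, hpn] at hbound
    rw [hθ]
    rw [show ‖d‖ / (n:ℝ) / 2 = ‖d‖ / (2 * n) from by ring] at hbound
    exact hbound
  have hθd : θ ≤ ‖d‖ := le_of_subdiv hd0 hstep
  have hθpi : θ ≤ π := Real.arccos_le_pi _
  have hθ0 : 0 ≤ θ := Real.arccos_nonneg _
  have hchord01 : ‖u 0 - u 1‖ = 2 * Real.sin (θ / 2) := chord_eq (hunorm 0) (hunorm 1)
  have hcu : ∀ s, c s = ‖x‖ • u s := by
    intro s
    rw [hu, smul_smul, mul_inv_cancel₀ (ne_of_gt hρ), one_smul]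
  have hc01 : ‖c 0 - c 1‖ = ‖x‖ * (2 * Real.sin (θ / 2)) := by
    rw [hcu 0, hcu 1, ← smul_sub, norm_smul, norm_norm, hchord01]
  have hend0 : c 0 = mApp (rotOf r₀) x := by rw [hc]; norm_num
  have hend1 : c 1 = mApp (rotOf r) x := by
    rw [hc]
    norm_num [hd]
  have hhalf : θ / 2 ≤ min (δ / 2) (π / 2) := by
    apply le_min
    · linarith
    · linarith
  have hsinmono : Real.sin (θ / 2) ≤ Real.sin (min (δ / 2) (π / 2)) := by
    apply Real.strictMonoOn_sin.monotoneOn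
    · constructor <;> [linarith [Real.pi_pos]; linarith]
    · constructor <;> [linarith [Real.pi_pos]; exact min_le_right _ _]
    · exact hhalf
  calc ‖mApp (rotOf r₀) x - mApp (rotOf r) x‖ = ‖c 0 - c 1‖ := by rw [hend0, hend1]
    _ = ‖x‖ * (2 * Real.sin (θ / 2)) := hc01
    _ ≤ ‖x‖ * (2 * Real.sin (min (δ / 2) (π / 2))) := by nlinarith
    _ = 2 * Real.sin (min (δ / 2) (π / 2)) * ‖x‖ := by ring

theorem cube_norm_le {v w : EuclideanSpace ℝ (Fin 3)} {σ : ℝ}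
    (h : ∀ k, |v k - w k| ≤ σ) : ‖v - w‖ ≤ Real.sqrt 3 * σ := by
  have hσ : 0 ≤ σ := (abs_nonneg _).trans (h 0)
  rw [EuclideanSpace.norm_eq]
  have hsum : ∑ k, ‖(v - w) k‖ ^ 2 ≤ 3 * σ ^ 2 := by
    have hk : ∀ k : Fin 3, ‖(v - w) k‖ ^ 2 ≤ σ ^ 2 := by
      intro k
      have h1 : ‖(v - w) k‖ = |v k - w k| := by
        simp [PiLp.sub_apply]
      rw [h1]
      have := h k
      nlinarith [abs_nonneg (v k - w k)]
    calc ∑ k, ‖(v - w) k‖ ^ 2 ≤ ∑ _k : Fin 3, σ ^ 2 := Finset.sum_le_sum fun k _ => hk k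
      _ = 3 * σ ^ 2 := by
        simp [Fin.sum_univ_three]
  calc Real.sqrt (∑ k, ‖(v - w) k‖ ^ 2) ≤ Real.sqrt (3 * σ ^ 2) :=
        Real.sqrt_le_sqrt hsum
    _ = Real.sqrt 3 * σ := by
        rw [Real.sqrt_mul (by norm_num), Real.sqrt_sq hσ]

noncomputable def ePt (Y : Finset (EuclideanSpace ℝ (Fin 3))) (hY : Y.Nonempty)
    (p : EuclideanSpace ℝ (Fin 3)) : ℝ := Y.inf' hY fun y => ‖p - y‖

theorem ePt_nonneg (Y : Finset (EuclideanSpace ℝ (Fin 3))) (hY : Y.Nonempty)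
    (p : EuclideanSpace ℝ (Fin 3)) : 0 ≤ ePt Y hY p :=
  Finset.le_inf' hY _ fun _y _ => norm_nonneg _

theorem ePt_le (Y : Finset (EuclideanSpace ℝ (Fin 3))) (hY : Y.Nonempty)
    (p q : EuclideanSpace ℝ (Fin 3)) : ePt Y hY p ≤ ePt Y hY q + ‖p - q‖ := by
  obtain ⟨y₀, hy₀, heq⟩ := Finset.exists_mem_eq_inf' hY fun y => ‖q - y‖
  have h1 : (Y.inf' hY fun y => ‖p - y‖) ≤ ‖p - y₀‖ := Finset.inf'_le _ hy₀
  have h2 : ‖p - y₀‖ ≤ ‖q - y₀‖ + ‖p - q‖ := by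
    have : p - y₀ = (q - y₀) + (p - q) := by abel
    rw [this]
    exact norm_add_le _ _
  show (Y.inf' hY fun y => ‖p - y‖) ≤ (Y.inf' hY fun y => ‖q - y‖) + ‖p - q‖
  rw [heq]
  linarith

theorem l2_registration_error_bounds
    (Y : Finset (EuclideanSpace ℝ (Fin 3))) (hY : Y.Nonempty)
    (N : ℕ) (x : Fin N → EuclideanSpace ℝ (Fin 3))
    (r₀ t₀ : EuclideanSpace ℝ (Fin 3)) (σr σt : ℝ) (hσr : 0 ≤ σr) (hσt : 0 ≤ σt) :
    let e : Fin N → EuclideanSpace ℝ (Fin 3) → EuclideanSpace ℝ (Fin 3) → ℝ :=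
      fun i r t => Y.inf' hY fun y => ‖mApp (rotOf r) (x i) + t - y‖
    let E : EuclideanSpace ℝ (Fin 3) → EuclideanSpace ℝ (Fin 3) → ℝ :=
      fun r t => ∑ i, (e i r t) ^ 2
    let γr : Fin N → ℝ :=
      fun i => 2 * Real.sin (min (Real.sqrt 3 * σr / 2) (Real.pi / 2)) * ‖x i‖
    let γt : ℝ := Real.sqrt 3 * σt
    let L : ℝ := ∑ i, (max (e i r₀ t₀ - (γr i + γt)) 0) ^ 2
    (∀ r t : EuclideanSpace ℝ (Fin 3),
        (∀ k, |r k - r₀ k| ≤ σr) → (∀ k, |t k - t₀ k| ≤ σt) → L ≤ E r t) ∧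
    L ≤ sInf {v : ℝ | ∃ r t : EuclideanSpace ℝ (Fin 3),
        (∀ k, |r k - r₀ k| ≤ σr) ∧ (∀ k, |t k - t₀ k| ≤ σt) ∧ v = E r t} ∧
    sInf {v : ℝ | ∃ r t : EuclideanSpace ℝ (Fin 3),
        (∀ k, |r k - r₀ k| ≤ σr) ∧ (∀ k, |t k - t₀ k| ≤ σt) ∧ v = E r t} ≤ E r₀ t₀ := by
  intro e E γr γt L
  have key : ∀ r t : EuclideanSpace ℝ (Fin 3),
      (∀ k, |r k - r₀ k| ≤ σr) → (∀ k, |t k - t₀ k| ≤ σt) → L ≤ E r t := by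
    intro r t hr ht
    apply Finset.sum_le_sum
    intro i _
    have hii : e i r₀ t₀ ≤ e i r t + (γr i + γt) := by
      have h1 : e i r₀ t₀ = ePt Y hY (mApp (rotOf r₀) (x i) + t₀) := rfl
      have h2 : e i r t = ePt Y hY (mApp (rotOf r) (x i) + t) := rfl
      rw [h1, h2]
      have h3 := ePt_le Y hY (mApp (rotOf r₀) (x i) + t₀) (mApp (rotOf r) (x i) + t)
      have hrr : ‖r - r₀‖ ≤ Real.sqrt 3 * σr := cube_norm_le hr
      have htt : ‖t₀ - t‖ ≤ Real.sqrt 3 * σt :=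
        cube_norm_le fun k => by rw [abs_sub_comm]; exact ht k
      have hrot := rot_bound r₀ r (x i) (δ := Real.sqrt 3 * σr) (by positivity) hrr
      have hdiff : ‖(mApp (rotOf r₀) (x i) + t₀) - (mApp (rotOf r) (x i) + t)‖ ≤ γr i + γt := by
        have hsplit : (mApp (rotOf r₀) (x i) + t₀) - (mApp (rotOf r) (x i) + t) =
            (mApp (rotOf r₀) (x i) - mApp (rotOf r) (x i)) + (t₀ - t) := by abel
        rw [hsplit]
        calc ‖(mApp (rotOf r₀) (x i) - mApp (rotOf r) (x i)) + (t₀ - t)‖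
            ≤ ‖mApp (rotOf r₀) (x i) - mApp (rotOf r) (x i)‖ + ‖t₀ - t‖ := norm_add_le _ _
          _ ≤ γr i + γt := add_le_add hrot htt
      linarith
    have he0 : 0 ≤ e i r t := ePt_nonneg Y hY _
    have hmax : max (e i r₀ t₀ - (γr i + γt)) 0 ≤ e i r t := max_le (by linarith) he0
    exact pow_le_pow_left₀ (le_max_right _ _) hmax 2
  refine ⟨key, ?_, ?_⟩
  · apply le_csInf
    · exact ⟨E r₀ t₀, r₀, t₀, fun k => by simpa using hσr, fun k => by simpa using hσt, rfl⟩
    · rintro v ⟨r, t, hr, ht, rfl⟩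
      exact key r t hr ht
  · apply csInf_le
    · exact ⟨L, by rintro v ⟨r, t, hr, ht, rfl⟩; exact key r t hr ht⟩
    · exact ⟨r₀, t₀, fun k => by simpa using hσr, fun k => by simpa using hσt, rfl⟩
end

section
/- For every r ∈ ℝ³, the trace of the rotation matrix R_r = exp([r]ₓ) equals 1 + 2 cos ‖r‖; equivalently, (trace(R_r) − 1)/2 = cos ‖r‖, so that for ‖r‖ ≤ π the rotation angle ‖r‖ is recovered as arccos((trace(R_r) − 1)/2). -/
open Matrix Real

section aux
attribute [local instance] Matrix.linftyOpNormedRing Matrix.linftyOpNormedAlgebra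

lemma crossMat_cube (r : EuclideanSpace ℝ (Fin 3)) :
    (crossMat r) ^ 3 = (-(r 0 ^ 2 + r 1 ^ 2 + r 2 ^ 2)) • crossMat r := by
  unfold crossMat
  ext i j
  fin_cases i <;> fin_cases j <;>
    simp [pow_succ, Matrix.mul_apply, Fin.sum_univ_three] <;> ring

lemma crossMat_pow_odd (r : EuclideanSpace ℝ (Fin 3)) (k : ℕ) :
    (crossMat r) ^ (2 * k + 1) = ((-(r 0 ^ 2 + r 1 ^ 2 + r 2 ^ 2)) ^ k) • crossMat r := by
  induction k with
  | zero => simp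
  | succ k ih =>
    have h : 2 * (k + 1) + 1 = 2 + (2 * k + 1) := by ring
    rw [h, pow_add, ih, Matrix.mul_smul]
    rw [show crossMat r ^ 2 * crossMat r = crossMat r ^ 3 from (pow_succ _ 2).symm,
      crossMat_cube, smul_smul, ← pow_succ]

lemma crossMat_pow_even (r : EuclideanSpace ℝ (Fin 3)) (k : ℕ) :
    (crossMat r) ^ (2 * (k + 1)) = ((-(r 0 ^ 2 + r 1 ^ 2 + r 2 ^ 2)) ^ k) • crossMat r ^ 2 := by
  have h : 2 * (k + 1) = (2 * k + 1) + 1 := by ring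
  rw [h, pow_succ, crossMat_pow_odd, Matrix.smul_mul, ← pow_two]

lemma trace_crossMat (r : EuclideanSpace ℝ (Fin 3)) : (crossMat r).trace = 0 := by
  simp [crossMat, Matrix.trace, Fin.sum_univ_three, Matrix.diag]

lemma trace_crossMat_sq (r : EuclideanSpace ℝ (Fin 3)) :
    (crossMat r ^ 2).trace = -2 * (r 0 ^ 2 + r 1 ^ 2 + r 2 ^ 2) := by
  unfold crossMat
  simp [pow_two, Matrix.trace, Matrix.mul_apply, Fin.sum_univ_three, Matrix.diag]
  ring

lemma norm_sq_eq (r : EuclideanSpace ℝ (Fin 3)) :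
    ‖r‖ ^ 2 = r 0 ^ 2 + r 1 ^ 2 + r 2 ^ 2 := by
  rw [EuclideanSpace.norm_eq, Real.sq_sqrt (by positivity)]
  simp [Fin.sum_univ_three, sq_abs]

lemma trace_exp_crossMat (r : EuclideanSpace ℝ (Fin 3)) :
    (rotOf r).trace = 1 + 2 * Real.cos ‖r‖ := by
  set K := crossMat r with hK
  set c : ℝ := r 0 ^ 2 + r 1 ^ 2 + r 2 ^ 2 with hc
  set θ := ‖r‖ with hθ
  have hθ2 : θ ^ 2 = c := norm_sq_eq r
  -- the exponential series
  have hsum : HasSum (fun n : ℕ => ((n.factorial : ℝ))⁻¹ • K ^ n) (rotOf r) := by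
    rw [rotOf, NormedSpace.exp_eq_tsum (𝕂 := ℝ)]
    exact (NormedSpace.expSeries_summable' (𝕂 := ℝ) K).hasSum
  -- map through the trace functional
  have htr : HasSum (fun n : ℕ => ((n.factorial : ℝ))⁻¹ * (K ^ n).trace) ((rotOf r).trace) := by
    have := hsum.mapL (LinearMap.toContinuousLinearMap (Matrix.traceLinearMap (Fin 3) ℝ ℝ))
    simpa [Matrix.trace_smul, smul_eq_mul] using this
  set f : ℕ → ℝ := fun n => ((n.factorial : ℝ))⁻¹ * (K ^ n).trace with hf
  -- odd part
  have hodd : HasSum (fun k : ℕ => f (2 * k + 1)) 0 := by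
    have : (fun k : ℕ => f (2 * k + 1)) = fun _ => (0 : ℝ) := by
      funext k
      simp [hf, hK, crossMat_pow_odd r k, Matrix.trace_smul, trace_crossMat]
    rw [this]; exact hasSum_zero
  -- even part from the cosine series
  have hcos := Real.hasSum_cos θ
  have hcos1 : HasSum (fun k : ℕ => (-1 : ℝ) ^ (k + 1) * θ ^ (2 * (k + 1)) / ((2 * (k + 1)).factorial : ℝ)) (Real.cos θ - 1) := by
    have h0 := (hasSum_nat_add_iff' (f := fun n : ℕ => (-1 : ℝ) ^ n * θ ^ (2 * n) / ((2 * n).factorial : ℝ)) (g := Real.cos θ) 1).mpr hcos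
    simpa using h0
  have heven1 : HasSum (fun k : ℕ => f (2 * (k + 1))) (2 * (Real.cos θ - 1)) := by
    have h2 := hcos1.mul_left 2
    convert h2 using 1
    · rfl
    funext k
    have : (K ^ (2 * (k + 1))).trace = ((-c) ^ k) * (-2 * c) := by
      rw [crossMat_pow_even r k, Matrix.trace_smul, smul_eq_mul, ← hK, trace_crossMat_sq, ← hc]
    rw [hf]
    simp only [this]
    have hth : θ ^ (2 * (k + 1)) = c ^ (k + 1) := by rw [pow_mul, hθ2]
    rw [hth, neg_pow]
    have hfa : ((2 * (k + 1)).factorial : ℝ) ≠ 0 := Nat.cast_ne_zero.mpr (Nat.factorial_ne_zero _)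
    field_simp
    ring
  have heven : HasSum (fun k : ℕ => f (2 * k)) (2 * (Real.cos θ - 1) + 3) := by
    have h1 : HasSum (fun k : ℕ => f (2 * (k + 1))) (2 * (Real.cos θ - 1)) := heven1
    have h2 := (hasSum_nat_add_iff (f := fun k : ℕ => f (2 * k)) (g := 2 * (Real.cos θ - 1)) 1).mp h1
    convert h2 using 1
    · rfl
    simp [hf, Matrix.trace_one]
  have := (heven.even_add_odd hodd)
  have hfin : HasSum f (2 * (Real.cos θ - 1) + 3 + 0) := this
  have := hfin.unique htr
  rw [← this]; ring

end aux

theorem trace_rotOf (r : EuclideanSpace ℝ (Fin 3)) :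
    (rotOf r).trace = 1 + 2 * Real.cos ‖r‖ ∧
    ((rotOf r).trace - 1) / 2 = Real.cos ‖r‖ ∧
    (‖r‖ ≤ Real.pi → Real.arccos (((rotOf r).trace - 1) / 2) = ‖r‖) := by
  have h := trace_exp_crossMat r
  refine ⟨h, by rw [h]; ring, fun hle => ?_⟩
  rw [h, show (1 + 2 * Real.cos ‖r‖ - 1) / 2 = Real.cos ‖r‖ by ring]
  exact Real.arccos_cos (norm_nonneg r) hle
end
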